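/- In the setting of Lemma 5.4 of the paper: let A be generated by a', x', y' with x'a' = qa'x', y'a' = q^{-1}a'y', a'^n = 1, x'^n = y'^n = 0, y'x' - q^{-n₁}x'y' = a'^{2n₁} - γ for a scalar γ. If m₀ satisfies y'm₀ = 0 and a'm₀ = q^i m₀, then for all u ≥ 1, y' x'^u m₀ = ((1 - q^{-un₁})/(1 - q^{-n₁})) (q^{(2i-u+1)n₁} - γ) x'^{u-1} m₀. -/
import Mathlib

lemma smulcomm' {K A M : Type*} [CommSemiring K] [Ring A] [Algebra K A]
    [AddCommMonoid M] [Module A M] [Module K M] [IsScalarTower K A M]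
    (b : A) (c : K) (m : M) : b • (c • m) = c • (b • m) := by
  rw [← algebraMap_smul A c m, ← mul_smul, ← Algebra.commutes, mul_smul, algebraMap_smul]

lemma eig_pow' {K A M : Type*} [CommSemiring K] [Ring A] [Algebra K A]
    [AddCommMonoid M] [Module A M] [Module K M] [IsScalarTower K A M]
    (b : A) (c : K) (m : M) (h : b • m = c • m) : ∀ k : ℕ, (b ^ k) • m = (c ^ k) • m := by
  intro k
  induction k with
  | zero => simp
  | succ k ih => rw [pow_succ, mul_smul, h, smulcomm', ih, smul_smul, ← pow_succ']

/-- The action formula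
`y' x'^u m₀ = ((1 - q^{-u n₁})/(1 - q^{-n₁})) (q^{(2i-u+1)n₁} - γ) x'^{u-1} m₀`. -/
theorem stmt12 {K A : Type*} [Field K] [Ring A] [Algebra K A]
    (n n₁ : ℕ) (q : K) (hq : q ^ n₁ ≠ 1) (γ : K)
    (a' x' y' : A)
    (hxa : x' * a' = q • (a' * x')) (hya : y' * a' = q⁻¹ • (a' * y'))
    (han : a' ^ n = 1) (hxn : x' ^ n = 0) (hyn : y' ^ n = 0)
    (hyx : y' * x' - (q⁻¹) ^ n₁ • (x' * y') = a' ^ (2 * n₁) - algebraMap K A γ)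
    (M : Type*) [AddCommGroup M] [Module A M] [Module K M] [IsScalarTower K A M]
    (m₀ : M) (i : ℕ) (hy0 : y' • m₀ = 0) (ha0 : a' • m₀ = (q ^ i) • m₀) :
    ∀ u : ℕ, 1 ≤ u →
      y' • ((x' ^ u) • m₀)
        = (((1 - (q⁻¹) ^ (u * n₁)) / (1 - (q⁻¹) ^ n₁))
            * (q ^ ((2 * (i : ℤ) - u + 1) * n₁) - γ)) • ((x' ^ (u - 1)) • m₀) := by
  have n₁pos : 0 < n₁ := by
    rcases Nat.eq_zero_or_pos n₁ with h | h
    · exfalso; apply hq; rw [h, pow_zero]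
    · exact h
  have hyx' : y' * x' = (q⁻¹) ^ n₁ • (x' * y') + (a' ^ (2 * n₁) - algebraMap K A γ) := by
    rw [← hyx]; abel
  by_cases hq0 : q = 0
  · subst hq0
    by_cases hn : n = 0
    · have h1 : (1 : A) = 0 := by have := hxn; rwa [hn, pow_zero] at this
      have hM : ∀ m : M, m = 0 := fun m => by
        calc m = (1 : A) • m := (one_smul A m).symm
          _ = (0 : A) • m := by rw [h1]
          _ = 0 := zero_smul A m
      intro u hu
      exact (hM _).trans (hM _).symm
    · have npos : 1 ≤ n := Nat.one_le_iff_ne_zero.mpr hn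
      have hinv : a' * a' ^ (n - 1) = 1 := by
        rw [← pow_succ', Nat.sub_add_cancel npos, han]
      have hinv2 : a' ^ (n - 1) * a' = 1 := by
        rw [← pow_succ, Nat.sub_add_cancel npos, han]
      have hx0 : x' = 0 := by
        have h1 : x' * a' = 0 := by rw [hxa, zero_smul]
        calc x' = x' * (a' * a' ^ (n - 1)) := by rw [hinv, mul_one]
          _ = (x' * a') * a' ^ (n - 1) := (mul_assoc _ _ _).symm
          _ = 0 := by rw [h1, zero_mul]
      intro u hu
      obtain ⟨v, rfl⟩ : ∃ v, u = v + 1 := ⟨u - 1, by omega⟩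
      cases v with
      | succ w =>
          rw [hx0]
          simp [zero_pow]
      | zero =>
          by_cases hi : i = 0
          · subst hi
            have ham : a' • m₀ = (1 : K) • m₀ := by simpa using ha0
            have hgal : a' ^ (2 * n₁) = algebraMap K A γ := by
              have h2 : (0 : A) = a' ^ (2 * n₁) - algebraMap K A γ := by
                rw [← hyx, hx0]; simp
              exact sub_eq_zero.mp h2.symm
            have hgm : γ • m₀ = m₀ := by
              rw [← algebraMap_smul A γ m₀, ← hgal, eig_pow' a' 1 m₀ ham, one_pow, one_smul]
            have e1 : ((2 * (((0:ℕ)) : ℤ) - (((0:ℕ)+1 : ℕ) : ℤ) + 1) * (n₁ : ℤ)) = 0 := by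
              push_cast; ring
            rw [hx0, e1, zpow_zero]
            simp only [zero_add, pow_one, zero_smul, smul_zero, Nat.add_sub_cancel, pow_zero,
              one_smul, inv_zero]
            rw [zero_pow n₁pos.ne', zero_pow (Nat.mul_ne_zero one_ne_zero n₁pos.ne')]
            rw [sub_zero, div_self one_ne_zero, one_mul, sub_smul, one_smul]
            norm_num [hgm]
          · have hm0 : m₀ = 0 := by
              have h1 : a' • m₀ = 0 := by rw [ha0, zero_pow hi, zero_smul]
              calc m₀ = (1 : A) • m₀ := (one_smul _ _).symm
                _ = (a' ^ (n - 1) * a') • m₀ := by rw [hinv2]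
                _ = a' ^ (n - 1) • (a' • m₀) := mul_smul _ _ _
                _ = 0 := by rw [h1, smul_zero]
            simp [hm0]
  · -- q ≠ 0
    have hr0 : q⁻¹ ≠ 0 := inv_ne_zero hq0
    have h1s : (1 : K) - (q⁻¹) ^ n₁ ≠ 0 := by
      rw [sub_ne_zero]
      intro h
      apply hq
      rw [inv_pow] at h
      exact inv_eq_one.mp h.symm
    have axm : a' * x' = q⁻¹ • (x' * a') := by
      rw [hxa, smul_smul, inv_mul_cancel₀ hq0, one_smul]
    have key : ∀ v : ℕ, a' • (x' ^ v • m₀) = (q ^ i * (q⁻¹) ^ v) • (x' ^ v • m₀) := by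
      intro v
      induction v with
      | zero => simpa using ha0
      | succ v ih =>
          rw [pow_succ', mul_smul, ← mul_smul a' x', axm, smul_assoc, mul_smul, ih,
            smulcomm', smul_smul]
          congr 1
          ring
    have hz : ∀ v : ℕ, (q : K) ^ ((2 * (i : ℤ) - v) * n₁) = q ^ (2 * i * n₁) * (q⁻¹) ^ (v * n₁) := by
      intro v
      rw [show (2 * (i : ℤ) - v) * n₁ = ((2 * i * n₁ : ℕ) : ℤ) - ((v * n₁ : ℕ) : ℤ) by
        push_cast; ring, zpow_sub₀ hq0, zpow_natCast, zpow_natCast, div_eq_mul_inv, inv_pow]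
    suffices h : ∀ v : ℕ, y' • (x' ^ (v + 1) • m₀)
        = (((1 - (q⁻¹) ^ ((v + 1) * n₁)) / (1 - (q⁻¹) ^ n₁))
            * (q ^ ((2 * (i : ℤ) - v) * n₁) - γ)) • (x' ^ v • m₀) by
      intro u hu
      obtain ⟨v, rfl⟩ : ∃ v, u = v + 1 := ⟨u - 1, by omega⟩
      have e1 : (2 * (i : ℤ) - ((v + 1 : ℕ) : ℤ) + 1) = 2 * (i : ℤ) - v := by push_cast; ring
      rw [Nat.add_sub_cancel, e1]
      exact h v
    intro v
    induction v with
    | zero =>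
        have hy1 : y' • (x' • m₀) = ((q ^ i) ^ (2 * n₁) - γ) • m₀ := by
          calc y' • (x' • m₀) = (y' * x') • m₀ := (mul_smul _ _ _).symm
            _ = ((q⁻¹) ^ n₁ • (x' * y') + (a' ^ (2 * n₁) - algebraMap K A γ)) • m₀ := by
                rw [← hyx']
            _ = (q⁻¹) ^ n₁ • ((x' * y') • m₀) + (a' ^ (2 * n₁) • m₀ - algebraMap K A γ • m₀) := by
                rw [add_smul, sub_smul, smul_assoc]
            _ = ((q ^ i) ^ (2 * n₁) - γ) • m₀ := by
                rw [mul_smul, hy0, smul_zero, smul_zero, zero_add,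
                  eig_pow' a' (q ^ i) m₀ ha0, algebraMap_smul, ← sub_smul]
        rw [pow_one, pow_zero, one_smul, hy1, hz 0]
        congr 1
        rw [zero_add, one_mul, Nat.zero_mul, pow_zero, mul_one, div_self h1s, one_mul,
          ← pow_mul]
        ring_nf
    | succ v ih =>
        have hw : y' • (x' ^ (v + 2) • m₀)
            = ((q⁻¹) ^ n₁ * (((1 - (q⁻¹) ^ ((v + 1) * n₁)) / (1 - (q⁻¹) ^ n₁))
                * (q ^ ((2 * (i : ℤ) - v) * n₁) - γ))
              + ((q ^ i * (q⁻¹) ^ (v + 1)) ^ (2 * n₁) - γ)) • (x' ^ (v + 1) • m₀) := by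
          calc y' • (x' ^ (v + 2) • m₀)
              = (y' * x') • (x' ^ (v + 1) • m₀) := by
                rw [pow_succ', mul_smul, ← mul_smul]
            _ = (q⁻¹) ^ n₁ • ((x' * y') • (x' ^ (v + 1) • m₀))
                + (a' ^ (2 * n₁) • (x' ^ (v + 1) • m₀)
                  - algebraMap K A γ • (x' ^ (v + 1) • m₀)) := by
                rw [hyx', add_smul, sub_smul, smul_assoc]
            _ = (q⁻¹) ^ n₁ • (x' • (y' • (x' ^ (v + 1) • m₀)))
                + ((q ^ i * (q⁻¹) ^ (v + 1)) ^ (2 * n₁) • (x' ^ (v + 1) • m₀)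
                  - γ • (x' ^ (v + 1) • m₀)) := by
                rw [mul_smul, eig_pow' a' _ _ (key (v + 1)), algebraMap_smul]
            _ = _ := by
                rw [ih, smulcomm', ← mul_smul x', ← pow_succ', smul_smul,
                  ← sub_smul, ← add_smul]
        have gen : ∀ (s X : K), 1 - s ≠ 0 → ∀ w : ℕ,
            s * ((1 - s ^ (w + 1)) / (1 - s) * (X * s ^ w - γ)) + (X * s ^ (2 * w + 2) - γ)
              = (1 - s ^ (w + 2)) / (1 - s) * (X * s ^ (w + 1) - γ) := by
          intro s X hs w
          field_simp
          ring
        have e2 : (q ^ i * (q⁻¹) ^ (v + 1)) ^ (2 * n₁)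
            = q ^ (2 * i * n₁) * ((q⁻¹) ^ n₁) ^ (2 * v + 2) := by ring
        have e3 : (q⁻¹) ^ ((v + 1) * n₁) = ((q⁻¹) ^ n₁) ^ (v + 1) := by ring
        have e4 : (q⁻¹) ^ ((v + 1 + 1) * n₁) = ((q⁻¹) ^ n₁) ^ (v + 2) := by ring
        have e5 : (q⁻¹) ^ (v * n₁) = ((q⁻¹) ^ n₁) ^ v := by ring
        rw [hw]
        congr 1
        rw [hz v, hz (v + 1), e2, e3, e4, e5]
        exact gen ((q⁻¹) ^ n₁) (q ^ (2 * i * n₁)) h1s v
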